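/- Let R be a nontrivial commutative ring in which 2 is invertible, M a free R-module of finite rank n ≥ 1, and Q a quadratic form on M. Then the even Clifford algebra Cl₀(Q) is a free R-module of rank 2^(n−1). -/

import Mathlib

open CliffordAlgebra

namespace Stmt2Aux

variable {R : Type*} {M : Type*} [CommRing R] [AddCommGroup M] [Module R M]
variable {Q Q' : QuadraticForm R M} {B : LinearMap.BilinForm R M}

private lemma z1 : ∀ i : ZMod 2, 1 + (i + 1) = i := by decide
private lemma z2 : ∀ i : ZMod 2, i + 1 + 1 = i := by decide

lemma pow_le_evenOdd (k : ℕ) : (LinearMap.range (ι Q)) ^ k ≤ evenOdd Q (k : ZMod 2) :=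
  le_iSup_of_le (ι := {n : ℕ // (n : ZMod 2) = (k : ZMod 2)}) ⟨k, rfl⟩ le_rfl

lemma contractLeft_mem_pow (d : Module.Dual R M) {k : ℕ} {x : CliffordAlgebra Q}
    (hx : x ∈ (LinearMap.range (ι Q)) ^ k) :
    contractLeft d x ∈ evenOdd Q ((k : ZMod 2) + 1) := by
  induction hx using Submodule.pow_induction_on_left' with
  | algebraMap r =>
    rw [contractLeft_algebraMap]
    exact Submodule.zero_mem _
  | add x y n hx hy ihx ihy => simpa using Submodule.add_mem _ ihx ihy
  | mem_mul m hm n x hx ih =>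
    obtain ⟨v, rfl⟩ := hm
    rw [contractLeft_ι_mul]
    have h2 : ((n.succ : ℕ) : ZMod 2) + 1 = (n : ZMod 2) := by
      rw [Nat.cast_succ]; exact z2 _
    rw [h2]
    refine Submodule.sub_mem _ (Submodule.smul_mem _ _ (pow_le_evenOdd n hx)) ?_
    have := SetLike.mul_mem_graded (ι_mem_evenOdd_one Q v) ih
    rwa [z1] at this

lemma contractLeft_mem_evenOdd (d : Module.Dual R M) {i : ZMod 2} {x : CliffordAlgebra Q}
    (hx : x ∈ evenOdd Q i) : contractLeft d x ∈ evenOdd Q (i + 1) := by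
  induction hx using Submodule.iSup_induction'
    (p := fun j : {n : ℕ // (n : ZMod 2) = i} => (LinearMap.range (ι Q)) ^ (j : ℕ)) with
  | mem j x hx =>
    obtain ⟨k, rfl⟩ := j
    exact contractLeft_mem_pow d hx
  | zero => simpa using Submodule.zero_mem _
  | add x y _ _ ihx ihy => simpa using Submodule.add_mem _ ihx ihy

lemma changeForm_mem_even (h : B.toQuadraticMap = Q' - Q) {x : CliffordAlgebra Q}
    (hx : x ∈ evenOdd Q 0) : changeForm h x ∈ evenOdd Q' 0 := by
  induction x, hx using even_induction with
  | algebraMap r =>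
    rw [changeForm_algebraMap]
    exact SetLike.algebraMap_mem_graded _ _
  | add x y hx hy ihx ihy =>
    rw [map_add]
    exact Submodule.add_mem _ ihx ihy
  | ι_mul_ι_mul m₁ m₂ x hx ih =>
    rw [mul_assoc, changeForm_ι_mul]
    have hy : changeForm h (ι Q m₂ * x) ∈ evenOdd Q' 1 := by
      rw [changeForm_ι_mul]
      refine Submodule.sub_mem _ ?_ ?_
      · have := SetLike.mul_mem_graded (ι_mem_evenOdd_one Q' m₂) ih
        rwa [add_zero] at this
      · simpa using contractLeft_mem_evenOdd _ ih
    refine Submodule.sub_mem _ ?_ ?_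
    · have := SetLike.mul_mem_graded (ι_mem_evenOdd_one Q' m₁) hy
      rwa [(by decide : (1 : ZMod 2) + 1 = 0)] at this
    · have := contractLeft_mem_evenOdd (B m₁) hy
      rwa [(by decide : (1 : ZMod 2) + 1 = 0)] at this

end Stmt2Aux

namespace Stmt2Aux

variable {R : Type*} {M : Type*} [CommRing R] [AddCommGroup M] [Module R M]
variable {Q Q' : QuadraticForm R M} {B : LinearMap.BilinForm R M}

lemma map_changeForm_even (h : B.toQuadraticMap = Q' - Q) :
    (evenOdd Q 0).map ((changeFormEquiv h : CliffordAlgebra Q ≃ₗ[R] CliffordAlgebra Q') :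
        CliffordAlgebra Q →ₗ[R] CliffordAlgebra Q') = evenOdd Q' 0 := by
  apply le_antisymm
  · rintro _ ⟨x, hx, rfl⟩
    simpa using changeForm_mem_even h hx
  · intro y hy
    refine ⟨(changeFormEquiv h).symm y, ?_, (changeFormEquiv h).apply_symm_apply y⟩
    rw [changeFormEquiv_symm]
    simpa using changeForm_mem_even (changeForm.neg_proof h) hy

/-- The even parts of two Clifford algebras whose forms differ by a bilinear form are
linearly equivalent. -/
noncomputable def evenEquivOfChangeForm (h : B.toQuadraticMap = Q' - Q) :
    evenOdd Q 0 ≃ₗ[R] evenOdd Q' 0 :=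
  ((changeFormEquiv h).submoduleMap (evenOdd Q 0)).trans
    (LinearEquiv.ofEq _ _ (map_changeForm_even h))

/-- With 2 invertible, the even parts for any two forms are linearly equivalent. -/
noncomputable def evenEquivOfForms [Invertible (2 : R)] (Q Q' : QuadraticForm R M) :
    evenOdd Q 0 ≃ₗ[R] evenOdd Q' 0 :=
  evenEquivOfChangeForm (B := QuadraticMap.associated (R := R) (Q' - Q))
    (QuadraticMap.toQuadraticMap_associated _ _)

end Stmt2Aux

namespace Stmt2Aux

variable {R : Type*} {M₁ M₂ : Type*} [CommRing R] [AddCommGroup M₁] [AddCommGroup M₂]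
  [Module R M₁] [Module R M₂]
variable {Q₁ : QuadraticForm R M₁} {Q₂ : QuadraticForm R M₂}

lemma map_mem_even (f : Q₁ →qᵢ Q₂) {x : CliffordAlgebra Q₁} (hx : x ∈ evenOdd Q₁ 0) :
    CliffordAlgebra.map f x ∈ evenOdd Q₂ 0 := by
  induction x, hx using even_induction with
  | algebraMap r =>
    rw [AlgHom.commutes]
    exact SetLike.algebraMap_mem_graded _ _
  | add x y hx hy ihx ihy =>
    rw [map_add]
    exact Submodule.add_mem _ ihx ihy
  | ι_mul_ι_mul m₁ m₂ x hx ih =>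
    rw [map_mul, map_mul, map_apply_ι, map_apply_ι]
    have := SetLike.mul_mem_graded (ι_mul_ι_mem_evenOdd_zero Q₂ (f m₁) (f m₂)) ih
    rwa [zero_add] at this

lemma map_equivOfIsometry_even (e : Q₁.IsometryEquiv Q₂) :
    (evenOdd Q₁ 0).map ((equivOfIsometry e).toLinearEquiv :
        CliffordAlgebra Q₁ →ₗ[R] CliffordAlgebra Q₂) = evenOdd Q₂ 0 := by
  apply le_antisymm
  · rintro _ ⟨x, hx, rfl⟩
    exact map_mem_even e.toIsometry hx
  · intro y hy
    refine ⟨(equivOfIsometry e).symm y, ?_, (equivOfIsometry e).apply_symm_apply y⟩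
    rw [equivOfIsometry_symm]
    exact map_mem_even e.symm.toIsometry hy

/-- Even parts are equivalent under isometry equivalences of quadratic forms. -/
noncomputable def evenEquivOfIsometry (e : Q₁.IsometryEquiv Q₂) :
    evenOdd Q₁ 0 ≃ₗ[R] evenOdd Q₂ 0 :=
  ((equivOfIsometry e).toLinearEquiv.submoduleMap (evenOdd Q₁ 0)).trans
    (LinearEquiv.ofEq _ _ (map_equivOfIsometry_even e))

/-- Any linear equivalence is an isometry between zero forms. -/
def zeroIsometryEquiv (f : M₁ ≃ₗ[R] M₂) :
    (0 : QuadraticForm R M₁).IsometryEquiv (0 : QuadraticForm R M₂) :=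
  { f with map_app' := fun _ => rfl }

end Stmt2Aux

namespace Stmt2Aux

variable {R : Type*} [CommRing R]

lemma prod_zero_zero {M₁ M₂ : Type*} [AddCommGroup M₁] [AddCommGroup M₂] [Module R M₁]
    [Module R M₂] :
    (0 : QuadraticForm R M₁).prod (0 : QuadraticForm R M₂) = 0 := by
  ext x
  simp [QuadraticMap.prod_apply]

/-- `Cl(0)` on the zero module is `R`. -/
noncomputable def clZeroBase : CliffordAlgebra (0 : QuadraticForm R (Fin 0 → R)) ≃ₗ[R] R := by
  have f : (Fin 0 → R) ≃ₗ[R] PUnit :=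
    { toFun := fun _ => PUnit.unit
      invFun := fun _ => 0
      map_add' := fun _ _ => rfl
      map_smul' := fun _ _ => rfl
      left_inv := fun x => Subsingleton.elim _ _
      right_inv := fun x => rfl }
  exact ((equivOfIsometry (zeroIsometryEquiv f)).trans CliffordAlgebraRing.equiv).toLinearEquiv

/-- `Cl(0)` on `R` is two-dimensional. -/
noncomputable def clZeroR : CliffordAlgebra (0 : QuadraticForm R R) ≃ₗ[R] R × R :=
  (CliffordAlgebraDualNumber.equiv (R := R)).toLinearEquiv.trans
    (LinearEquiv.refl R (R × R) : DualNumber R ≃ₗ[R] R × R)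

end Stmt2Aux

namespace Stmt2Aux

variable {R : Type*} [CommRing R]

/-- Isometry equivalence from an equality of quadratic forms. -/
def isometryEquivOfEq {M : Type*} [AddCommGroup M] [Module R M] {Q Q' : QuadraticForm R M}
    (h : Q = Q') : Q.IsometryEquiv Q' :=
  { LinearEquiv.refl R M with map_app' := fun m => by subst h; rfl }

/-- `Fin (m+1) → R` splits off a factor of `R`. -/
noncomputable def finSuccLEquiv (m : ℕ) : (Fin (m + 1) → R) ≃ₗ[R] (Fin m → R) × R :=
  (LinearEquiv.funCongrLeft R R finSumFinEquiv :
      (Fin (m + 1) → R) ≃ₗ[R] (Fin m ⊕ Fin 1 → R)) ≪≫ₗ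
    LinearEquiv.sumArrowLequivProdArrow (Fin m) (Fin 1) R R ≪≫ₗ
    LinearEquiv.prodCongr (LinearEquiv.refl R (Fin m → R)) (LinearEquiv.funUnique (Fin 1) R R)

open scoped TensorProduct in
/-- The Clifford algebra of the zero form on `Fin (m+1) → R` decomposes as a tensor product. -/
noncomputable def clZeroSucc (m : ℕ) :
    CliffordAlgebra (0 : QuadraticForm R (Fin (m + 1) → R)) ≃ₗ[R]
      (CliffordAlgebra (0 : QuadraticForm R (Fin m → R)) ⊗[R]
        CliffordAlgebra (0 : QuadraticForm R R)) := by
  have f : (Fin (m + 1) → R) ≃ₗ[R] (Fin m → R) × R := finSuccLEquiv m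
  exact (((equivOfIsometry (zeroIsometryEquiv f)).trans
    ((equivOfIsometry (isometryEquivOfEq prod_zero_zero.symm)).trans
      (CliffordAlgebra.prodEquiv _ _))).toLinearEquiv).trans
    ((GradedTensorProduct.of R (evenOdd (0 : QuadraticForm R (Fin m → R)))
      (evenOdd (0 : QuadraticForm R R))).symm)

lemma clZeroPi_free_rank [Nontrivial R] (m : ℕ) :
    Module.Free R (CliffordAlgebra (0 : QuadraticForm R (Fin m → R))) ∧
      Module.rank R (CliffordAlgebra (0 : QuadraticForm R (Fin m → R))) = 2 ^ m := by
  induction m with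
  | zero =>
    refine ⟨Module.Free.of_equiv clZeroBase.symm, ?_⟩
    rw [clZeroBase.rank_eq, Module.rank_self, pow_zero]
  | succ m ih =>
    obtain ⟨ihf, ihr⟩ := ih
    haveI := ihf
    haveI : Module.Free R (CliffordAlgebra (0 : QuadraticForm R R)) :=
      Module.Free.of_equiv clZeroR.symm
    refine ⟨Module.Free.of_equiv (clZeroSucc m).symm, ?_⟩
    rw [(clZeroSucc m).rank_eq, rank_tensorProduct', ihr, clZeroR.rank_eq, rank_prod', Module.rank_self]
    rw [pow_succ]
    norm_num

end Stmt2Aux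

namespace Stmt2Aux

open CliffordAlgebra.EquivEven

variable {R M : Type*} [CommRing R] [AddCommGroup M] [Module R M]

/-- The even part of a Clifford algebra, as a submodule, is equivalent to a Clifford algebra
one rank down. -/
noncomputable def evenEquivCl [Invertible (2 : R)] (m : ℕ) (g : M ≃ₗ[R] ((Fin m → R) × R))
    (Q : QuadraticForm R M) :
    evenOdd Q 0 ≃ₗ[R] CliffordAlgebra (0 : QuadraticForm R (Fin m → R)) := by
  set Q₀ : QuadraticForm R (Fin m → R) := 0 with hQ₀
  have s1 : evenOdd Q 0 ≃ₗ[R] evenOdd (0 : QuadraticForm R M) 0 := evenEquivOfForms Q 0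
  have s2 : evenOdd (0 : QuadraticForm R M) 0 ≃ₗ[R]
      evenOdd (0 : QuadraticForm R ((Fin m → R) × R)) 0 :=
    evenEquivOfIsometry (zeroIsometryEquiv g)
  have s3 : evenOdd (0 : QuadraticForm R ((Fin m → R) × R)) 0 ≃ₗ[R] evenOdd (Q' Q₀) 0 :=
    evenEquivOfForms _ _
  have s4 : evenOdd (Q' Q₀) 0 ≃ₗ[R] CliffordAlgebra.even (Q' Q₀) :=
    LinearEquiv.ofEq _ _ (even_toSubmodule (Q' Q₀)).symm
  have s5 : CliffordAlgebra.even (Q' Q₀) ≃ₗ[R] CliffordAlgebra Q₀ :=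
    (equivEven Q₀).symm.toLinearEquiv
  exact s1 ≪≫ₗ s2 ≪≫ₗ s3 ≪≫ₗ s4 ≪≫ₗ s5

end Stmt2Aux


/-- Over a nontrivial commutative ring with 2 invertible, the even
Clifford algebra of a quadratic form on a free module of finite rank `n ≥ 1` is a
free module of rank `2 ^ (n - 1)`. -/
theorem stmt2 (R M : Type*) [CommRing R] [Nontrivial R] [Invertible (2 : R)]
    [AddCommGroup M] [Module R M] [Module.Free R M] [Module.Finite R M]
    (n : ℕ) (hn : 1 ≤ n) (hrank : Module.finrank R M = n)
    (Q : QuadraticForm R M) :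
    Module.Free R (CliffordAlgebra.even Q) ∧
      Module.rank R (CliffordAlgebra.even Q) = 2 ^ (n - 1) := by
  have hn' : n - 1 + 1 = n := Nat.succ_pred_eq_of_pos hn
  let b : Module.Basis (Fin n) R M := (Module.finBasis R M).reindex (finCongr hrank)
  have g : M ≃ₗ[R] ((Fin (n - 1) → R) × R) :=
    b.equivFun ≪≫ₗ
      (LinearEquiv.funCongrLeft R R (finCongr hn') :
        (Fin n → R) ≃ₗ[R] (Fin (n - 1 + 1) → R)) ≪≫ₗ
      Stmt2Aux.finSuccLEquiv (n - 1)
  have E0 : CliffordAlgebra.even Q ≃ₗ[R] CliffordAlgebra.evenOdd Q 0 :=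
    LinearEquiv.ofEq _ _ (CliffordAlgebra.even_toSubmodule Q)
  have E : CliffordAlgebra.even Q ≃ₗ[R]
      CliffordAlgebra (0 : QuadraticForm R (Fin (n - 1) → R)) :=
    E0 ≪≫ₗ Stmt2Aux.evenEquivCl (n - 1) g Q
  obtain ⟨hf, hr⟩ := Stmt2Aux.clZeroPi_free_rank (R := R) (n - 1)
  refine ⟨Module.Free.of_equiv E.symm, ?_⟩
  have h := E.lift_rank_eq
  rw [hr, show ((2 : Cardinal) ^ (n - 1)) = ((2 ^ (n - 1) : ℕ) : Cardinal) by push_cast; ring,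
    Cardinal.lift_natCast] at h
  rw [Cardinal.lift_eq_nat_iff] at h
  rw [h]
  push_cast
  ring
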